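/- Let N ≥ 3 and let L be a Lie subalgebra of so(N,ℝ) (real antisymmetric N×N matrices with the commutator bracket) such that every matrix C ∈ L satisfies C_{ij} = 0 for all indices i ≥ 2 and j ≥ 2 (i.e. C has nonzero entries only in its first row and first column). Then L has dimension at most 1. -/

import Mathlib

open Matrix

attribute [local instance 100] LieRing.ofAssociativeRing

theorem statement10 (N : ℕ) (hN : 3 ≤ N)
    (L : LieSubalgebra ℝ (Matrix (Fin N) (Fin N) ℝ))
    (hskew : ∀ C ∈ L, Cᵀ = -C)
    (hrow : ∀ C ∈ L, ∀ i j : Fin N, i.val ≠ 0 → j.val ≠ 0 → C i j = 0) :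
    Module.finrank ℝ L ≤ 1 := by
  haveI : NeZero N := ⟨by omega⟩
  -- antisymmetry entrywise
  have hsk : ∀ C ∈ L, ∀ i j : Fin N, C j i = -C i j := by
    intro C hC i j
    have := congrFun (congrFun (hskew C hC) i) j
    simpa [Matrix.transpose_apply] using this
  by_cases hL : ∀ C ∈ L, C = (0 : Matrix (Fin N) (Fin N) ℝ)
  · have : L.toSubmodule ≤ ⊥ := by
      intro B hB
      simp [hL B hB]
    have h0 : Module.finrank ℝ L.toSubmodule ≤ Module.finrank ℝ (⊥ : Submodule ℝ (Matrix (Fin N) (Fin N) ℝ)) :=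
      Submodule.finrank_mono this
    exact h0.trans (by simp : Module.finrank ℝ (⊥ : Submodule ℝ (Matrix (Fin N) (Fin N) ℝ)) ≤ 1)
  · push_neg at hL
    obtain ⟨A, hA, hAne⟩ := hL
    -- find a nonzero entry in the first row
    have hex : ∃ i0 : Fin N, i0.val ≠ 0 ∧ A 0 i0 ≠ 0 := by
      by_contra h
      push_neg at h
      apply hAne
      funext i j
      by_cases hi : i.val = 0
      · have hi0 : i = 0 := Fin.ext hi
        subst hi0
        by_cases hj : j.val = 0
        · have hj0 : j = 0 := Fin.ext hj
          subst hj0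
          have := hsk A hA 0 0
          simp only [Matrix.zero_apply]
          linarith
        · simpa using h j hj
      · by_cases hj : j.val = 0
        · have hj0 : j = 0 := Fin.ext hj
          subst hj0
          have := hsk A hA 0 i
          rw [this]
          simpa using h i hi
        · simpa using hrow A hA i j hi hj
    obtain ⟨i0, hi0, hAi0⟩ := hex
    -- key bracket computation
    have key : ∀ B ∈ L, ∀ i j : Fin N, i.val ≠ 0 → j.val ≠ 0 →
        A i 0 * B 0 j = B i 0 * A 0 j := by
      intro B hB i j hi hj
      have hmem : ⁅A, B⁆ ∈ L := L.lie_mem hA hB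
      have h0 : ⁅A, B⁆ i j = 0 := hrow _ hmem i j hi hj
      rw [Ring.lie_def] at h0
      have h1 : ∀ C D : Matrix (Fin N) (Fin N) ℝ, C ∈ L → D ∈ L →
          (C * D) i j = C i 0 * D 0 j := by
        intro C D hC hD
        rw [Matrix.mul_apply]
        refine Finset.sum_eq_single_of_mem 0 (Finset.mem_univ _) ?_
        intro k _ hk
        have hkv : k.val ≠ 0 := fun h => hk (Fin.ext h)
        rw [hrow C hC i k hi hkv, zero_mul]
      have := h1 A B hA hB
      have := h1 B A hB hA
      simp only [Matrix.sub_apply, h1 A B hA hB, h1 B A hB hA] at h0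
      linarith
    -- every B in L is a multiple of A
    have hsub : L.toSubmodule ≤ Submodule.span ℝ {A} := by
      intro B hB
      set c : ℝ := B 0 i0 / A 0 i0 with hc
      have hBcA : B = c • A := by
        have hrowB : ∀ j : Fin N, B 0 j = c * A 0 j := by
          intro j
          by_cases hj : j.val = 0
          · have : j = 0 := Fin.ext hj
            subst this
            have hB00 : B 0 0 = 0 := by have := hsk B hB 0 0; linarith
            have hA00 : A 0 0 = 0 := by have := hsk A hA 0 0; linarith
            rw [hB00, hA00, mul_zero]
          · have hk := key B hB i0 j hi0 hj
            have hA0 : A i0 0 = -A 0 i0 := hsk A hA 0 i0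
            have hB0 : B i0 0 = -B 0 i0 := hsk B hB 0 i0
            rw [hA0, hB0] at hk
            rw [hc, div_mul_eq_mul_div, eq_div_iff hAi0]
            nlinarith [hk]
        funext i j
        by_cases hi : i.val = 0
        · have : i = 0 := Fin.ext hi
          subst this
          simpa using hrowB j
        · by_cases hj : j.val = 0
          · have : j = 0 := Fin.ext hj
            subst this
            have h1 : B i 0 = -B 0 i := hsk B hB 0 i
            have h2 : A i 0 = -A 0 i := hsk A hA 0 i
            simp only [Matrix.smul_apply, smul_eq_mul]
            rw [h1, h2, hrowB i]
            ring
          · simp only [Matrix.smul_apply, smul_eq_mul]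
            rw [hrow B hB i j hi hj, hrow A hA i j hi hj, mul_zero]
      exact Submodule.mem_span_singleton.mpr ⟨c, hBcA.symm⟩
    have h1 : Module.finrank ℝ L.toSubmodule ≤
        Module.finrank ℝ (Submodule.span ℝ {A}) := Submodule.finrank_mono hsub
    have h2 : Module.finrank ℝ (Submodule.span ℝ ({A} : Set (Matrix (Fin N) (Fin N) ℝ))) = 1 :=
      finrank_span_singleton hAne
    calc Module.finrank ℝ L = Module.finrank ℝ L.toSubmodule := rfl
      _ ≤ 1 := by rw [← h2]; exact h1
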